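/- Let M be a matching on {1,...,2n+2} containing {1,2}, and M' the matching on {1,...,2n} with {i,j} ∈ M' iff {i+2,j+2} ∈ M. Then the type DA bimodule MarkedMinHat, being U_rU_s-to-U_{r+2}U_{s+2} equivariant for all r,s and annihilated by U_1U_2, is μ_0^{M'}-μ_0^{M}-equivariant, and hence defines a curved type DA bimodule from the curved algebra (B(n+1), Σ_{{i,j}∈M} U_iU_j) to the curved algebra (B(n), Σ_{{i,j}∈M'} U_iU_j). -/

import Mathlib

open TensorProduct

noncomputable section

attribute [local instance] Classical.propDecidable

abbrev F2 := ZMod 2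

/-- Contraction `B ⊗ (B ⊗ X) → B ⊗ X` using multiplication on `B`. -/
def ctr (B : Type) [Ring B] [Algebra F2 B] (X : Type) [AddCommGroup X] [Module F2 X] :
    B ⊗[F2] (B ⊗[F2] X) →ₗ[F2] B ⊗[F2] X :=
  (LinearMap.rTensor X (LinearMap.mul' F2 B)).comp
    (TensorProduct.assoc F2 B B X).symm.toLinearMap

/-- The data of the structure maps `δ¹_{k+1} : X ⊗ A^{⊗k} → B ⊗ X` of a type DA bimodule
over the pair of algebras `(B, A)` (inputs from `A`, outputs in `B`). -/
def DAop (A B : Type) [Ring A] [Algebra F2 A] [Ring B] [Algebra F2 B]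
    (X : Type) [AddCommGroup X] [Module F2 X] : Type :=
  (k : ℕ) → (Fin k → A) → (X →ₗ[F2] B ⊗[F2] X)

variable {A B : Type} [Ring A] [Algebra F2 A] [Ring B] [Algebra F2 B]
variable {X : Type} [AddCommGroup X] [Module F2 X]

/-- The composition terms of the DA structure relation: split the inputs in two,
apply the operation to the first batch, and feed its output into the operation on the
second batch, multiplying the two `B`-outputs. -/
def compSum (δ : DAop A B X) (k : ℕ) (a : Fin k → A) (x : X) : B ⊗[F2] X :=
  ∑ i ∈ Finset.range (k + 1),
    if h : i ≤ k then
      (ctr B X) ((LinearMap.lTensor B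
          (δ (k - i) (fun t => a ⟨i + t.1, by have := t.2; omega⟩)))
        ((δ i (fun t => a ⟨t.1, by have := t.2; omega⟩)) x))
    else 0

/-- The multiplication terms of the DA structure relation: multiply two consecutive
algebra inputs. -/
def mergeSum (δ : DAop A B X) (k : ℕ) (a : Fin k → A) (x : X) : B ⊗[F2] X :=
  match k, a with
  | 0, _ => 0
  | (m + 1), a =>
      ∑ j : Fin (m + 1), if j.1 < m then (δ m (Fin.contractNth j (· * ·) a)) x else 0

/-- The type DA bimodule structure relation (over `F2`, with algebras having zero
differential). -/
def DARel (δ : DAop A B X) : Prop :=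
  ∀ (k : ℕ) (a : Fin k → A) (x : X), compSum δ k a x + mergeSum δ k a x = 0

/-- `a`-`b`-equivariance of a type DA bimodule: feeding in the single input `a` gives
output `b ⊗ x`, and any higher operation with `a` among its inputs vanishes. -/
def Equivariant (δ : DAop A B X) (a : A) (b : B) : Prop :=
  (∀ x : X, (δ 1 (fun _ => a)) x = b ⊗ₜ[F2] x) ∧
  (∀ (k : ℕ) (v : Fin k → A) (x : X), 1 < k → (∃ i, v i = a) → (δ k v) x = 0)

/-- The curved type DA bimodule structure relation, for curvatures `μA` on the input
algebra and `μB` on the output algebra. -/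
def CurvedDARel (δ : DAop A B X) (μA : A) (μB : B) : Prop :=
  ∀ (k : ℕ) (a : Fin k → A) (x : X),
    compSum δ k a x + mergeSum δ k a x
      + (if k = 0 then μB ⊗ₜ[F2] x else 0)
      + ∑ j : Fin (k + 1), (δ (k + 1) (Fin.insertNth j μA a)) x = 0

set_option maxHeartbeats 1000000

/-- let `M` be a matching on `{1,…,2n+2}` containing `{1,2}` and `M'` the
induced matching on `{1,…,2n}` (shifted down by two).  A type DA bimodule (such as
`MarkedMinHat`) which is `U_rU_s`-to-`U'_{r}U'_{s}` equivariant for all `r,s` and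
annihilated by `U₁U₂`, and whose operations are additive in each algebra input, is
`μ₀^{M}`-to-`μ₀^{M'}` equivariant, and hence satisfies the curved type DA bimodule
structure relations for the curvatures `μ₀^M = Σ_{{i,j}∈M} U_iU_j` and
`μ₀^{M'} = Σ_{{i,j}∈M'} U'_iU'_j`. -/
theorem stmt_8 (n : ℕ)
    {X : Type} [AddCommGroup X] [Module F2 X]
    {B1 B2 : Type} [Ring B1] [Algebra F2 B1] [Ring B2] [Algebra F2 B2]
    (δ : DAop B1 B2 X)
    (U : Fin (2 * n + 2) → B1) (U' : Fin (2 * n) → B2)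
    (M : Finset (Fin (2 * n + 2) × Fin (2 * n + 2)))
    (M' : Finset (Fin (2 * n) × Fin (2 * n)))
    (h01 : (⟨0, by omega⟩, ⟨1, by omega⟩) ∈ M)
    (hM' : ∀ i j : Fin (2 * n), (i, j) ∈ M' ↔
      ((⟨i.1 + 2, by have := i.2; omega⟩ : Fin (2 * n + 2)),
       (⟨j.1 + 2, by have := j.2; omega⟩ : Fin (2 * n + 2))) ∈ M)
    (hMform : ∀ p ∈ M,
      p = ((⟨0, by omega⟩ : Fin (2 * n + 2)), (⟨1, by omega⟩ : Fin (2 * n + 2))) ∨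
      (2 ≤ p.1.1 ∧ 2 ≤ p.2.1))
    (hDA : DARel δ)
    (hadd : ∀ (k : ℕ) (a : Fin k → B1) (i : Fin k) (b c : B1) (x : X),
      (δ k (Function.update a i (b + c))) x
        = (δ k (Function.update a i b)) x + (δ k (Function.update a i c)) x)
    (hEq : ∀ r s : Fin (2 * n),
      Equivariant δ
        (U ⟨r.1 + 2, by have := r.2; omega⟩ * U ⟨s.1 + 2, by have := s.2; omega⟩)
        (U' r * U' s))
    (hAnn : Equivariant δ (U ⟨0, by omega⟩ * U ⟨1, by omega⟩) 0) :
    Equivariant δ (∑ p ∈ M, U p.1 * U p.2) (∑ p ∈ M', U' p.1 * U' p.2) ∧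
    CurvedDARel δ (∑ p ∈ M, U p.1 * U p.2) (∑ p ∈ M', U' p.1 * U' p.2) := by
  classical
  set μA := ∑ p ∈ M, U p.1 * U p.2 with hμA
  set μB := ∑ p ∈ M', U' p.1 * U' p.2 with hμB
  -- δ applied to update with 0 vanishes
  have hzero : ∀ (k : ℕ) (a : Fin k → B1) (i : Fin k) (x : X),
      δ k (Function.update a i 0) x = 0 := by
    intro k a i x
    have h := hadd k a i 0 0 x
    rw [add_zero] at h
    exact (left_eq_add.mp h)
  -- additivity over finite sums
  have hsum : ∀ (k : ℕ) (a : Fin k → B1) (i : Fin k) (x : X)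
      (s : Finset (Fin (2*n+2) × Fin (2*n+2))),
      δ k (Function.update a i (∑ p ∈ s, U p.1 * U p.2)) x
        = ∑ p ∈ s, δ k (Function.update a i (U p.1 * U p.2)) x := by
    intro k a i x s
    induction s using Finset.induction_on with
    | empty => simpa using hzero k a i x
    | @insert _ _ hp ih =>
        rw [Finset.sum_insert hp, Finset.sum_insert hp, hadd, ih]
  have upd1 : ∀ b : B1,
      Function.update (fun _ : Fin 1 => (0:B1)) (0 : Fin 1) b = fun _ : Fin 1 => b := by
    intro b; funext i
    have hi : i = 0 := Subsingleton.elim i 0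
    rw [hi, Function.update_self]
  -- part 1 of equivariance
  have part1 : ∀ x : X, (δ 1 (fun _ => μA)) x = μB ⊗ₜ[F2] x := by
    intro x
    have h1 : (fun _ : Fin 1 => μA) = Function.update (fun _ : Fin 1 => (0:B1)) 0 μA :=
      (upd1 μA).symm
    rw [h1, hμA, hsum]
    rw [← Finset.add_sum_erase M _ h01]
    have hann : δ 1 (Function.update (fun _ : Fin 1 => (0:B1)) 0
        (U ⟨0, by omega⟩ * U ⟨1, by omega⟩)) x = 0 := by
      rw [upd1, hAnn.1, TensorProduct.zero_tmul]
    rw [hann, zero_add]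
    -- identify erased set with image of M'
    have hMeq : M.erase ((⟨0, by omega⟩ : Fin (2*n+2)), (⟨1, by omega⟩ : Fin (2*n+2)))
        = M'.image (fun q : Fin (2*n) × Fin (2*n) =>
            ((⟨q.1.1 + 2, by have := q.1.2; omega⟩ : Fin (2*n+2)),
             (⟨q.2.1 + 2, by have := q.2.2; omega⟩ : Fin (2*n+2)))) := by
      ext p
      simp only [Finset.mem_erase, Finset.mem_image]
      constructor
      · rintro ⟨hne, hp⟩
        rcases hMform p hp with he | ⟨h1', h2'⟩
        · exact absurd he hne
        · refine ⟨(⟨p.1.1 - 2, by have := p.1.2; omega⟩, ⟨p.2.1 - 2, by have := p.2.2; omega⟩),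
            ?_, ?_⟩
          · rw [hM']
            convert hp using 2 <;>
              first
              | (apply Fin.ext; omega)
              | (apply Fin.ext; simp; omega)
          · simp only [Prod.ext_iff, Fin.ext_iff]
            constructor <;> first | omega | (simp; omega)
      · rintro ⟨q, hq, rfl⟩
        refine ⟨?_, (hM' q.1 q.2).mp hq⟩
        intro he
        have := congrArg (fun p => p.1.1) he
        simp at this
    rw [hMeq]
    rw [Finset.sum_image (by
      intro q1 _ q2 _ h
      have h1 := congrArg (fun p => p.1.1) h
      have h2 := congrArg (fun p => p.2.1) h
      simp at h1 h2
      ext <;> first | omega | (simp [Fin.ext_iff]; omega))]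
    have hterm : ∀ q ∈ M', δ 1 (Function.update (fun _ : Fin 1 => (0:B1)) 0
        (U ⟨q.1.1 + 2, by have := q.1.2; omega⟩ * U ⟨q.2.1 + 2, by have := q.2.2; omega⟩)) x
        = (U' q.1 * U' q.2) ⊗ₜ[F2] x := by
      intro q _
      rw [upd1, (hEq q.1 q.2).1]
    rw [Finset.sum_congr rfl hterm, hμB, TensorProduct.sum_tmul]
  -- part 2 of equivariance
  have part2 : ∀ (k : ℕ) (v : Fin k → B1) (x : X), 1 < k → (∃ i, v i = μA) →
      (δ k v) x = 0 := by
    rintro k v x hk ⟨i, hvi⟩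
    have hv : v = Function.update v i μA := by rw [← hvi, Function.update_eq_self]
    rw [hv, hμA, hsum]
    apply Finset.sum_eq_zero
    intro p hp
    rcases hMform p hp with he | ⟨h1', h2'⟩
    · rw [he]
      exact hAnn.2 k _ x hk ⟨i, Function.update_self ..⟩
    · have hU : U p.1 * U p.2
          = U ⟨(p.1.1 - 2) + 2, by have := p.1.2; omega⟩
            * U ⟨(p.2.1 - 2) + 2, by have := p.2.2; omega⟩ := by
        congr 2 <;> exact Fin.ext (by simp; omega)
      refine (hEq ⟨p.1.1 - 2, by have := p.1.2; omega⟩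
        ⟨p.2.1 - 2, by have := p.2.2; omega⟩).2 k _ x hk ⟨i, ?_⟩
      rw [Function.update_self, hU]
  refine ⟨⟨part1, part2⟩, ?_⟩
  intro k a x
  have hda := hDA k a x
  rw [hda, zero_add]
  cases k with
  | zero =>
      rw [if_pos rfl]
      have hins : ∀ j : Fin 1, Fin.insertNth j μA a = fun _ : Fin 1 => μA := by
        intro j; funext t
        have ht : t = j := Fin.ext (by omega)
        rw [ht, Fin.insertNth_apply_same]
      rw [Fin.sum_univ_one, hins, part1, ← two_smul F2]
      rw [show (2 : F2) = 0 from rfl, zero_smul]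
  | succ m =>
      rw [if_neg (by omega), zero_add]
      apply Finset.sum_eq_zero
      intro j _
      exact part2 (m + 2) _ x (by omega) ⟨j, Fin.insertNth_apply_same ..⟩
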